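/- Let R be a commutative Noetherian ring, M a finitely generated R-module, and let P₁ →f→ P₀ → M → 0 be an exact sequence with P₁, P₀ finitely generated projective R-modules; let Tr M = coker(f* : Hom_R(P₀,R) → Hom_R(P₁,R)). Then ann_R Tor_1^R(M, Tr M) equals the set {x ∈ R : the multiplication map x·id_M : M → M factors through some finitely generated free R-module}. -/

import Mathlib

set_option linter.dupNamespace false
set_option linter.unusedSectionVars false

open CategoryTheory Opposite

universe u


namespace AuslanderTorAux

section Algebra


open TensorProduct LinearMap Module

variable {R : Type u} [CommRing R]
variable {P N : Type u} [AddCommGroup P] [Module R P] [AddCommGroup N] [Module R N]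

lemma dth_nat {P' : Type u} [AddCommGroup P'] [Module R P'] (u : P' →ₗ[R] P)
    (z : Dual R P ⊗[R] N) :
    dualTensorHom R P' N ((u.dualMap.rTensor N) z) = (dualTensorHom R P N z) ∘ₗ u := by
  induction z using TensorProduct.induction_on with
  | zero => simp
  | tmul φ n => ext p; simp
  | add a b ha hb => simp only [map_add, ha, hb, add_comp]

lemma dth_bijective [Module.Finite R P] [Module.Projective R P] :
    Function.Bijective (dualTensorHom R P N) := by
  obtain ⟨n, p, s, hp, -, hps⟩ := Module.Finite.exists_comp_eq_id_of_projective R P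
  have hfree : Function.Bijective (dualTensorHom R (Fin n → R) N) := by
    have := (dualTensorHomEquivOfBasis (N := N) (Pi.basisFun R (Fin n))).bijective
    simpa [dualTensorHomEquivOfBasis_toLinearMap, coe_dualTensorHomEquivOfBasis] using this
  have hsp : s.dualMap ∘ₗ p.dualMap = LinearMap.id := by
    rw [dualMap_comp_dualMap, hps, dualMap_id]
  constructor
  · intro z₁ z₂ h
    have h1 : p.dualMap.rTensor N z₁ = p.dualMap.rTensor N z₂ :=
      hfree.1 (by rw [dth_nat, dth_nat, h])
    have h2 := congrArg (s.dualMap.rTensor N) h1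
    rwa [← rTensor_comp_apply, ← rTensor_comp_apply, hsp, rTensor_id, id_coe, id_eq, id_eq] at h2
  · intro h
    obtain ⟨z', hz'⟩ := hfree.2 (h ∘ₗ p)
    refine ⟨s.dualMap.rTensor N z', ?_⟩
    rw [dth_nat, hz', comp_assoc, hps, comp_id]

variable {M P₁ P₀ : Type u} [AddCommGroup M] [Module R M]
  [AddCommGroup P₁] [Module R P₁] [AddCommGroup P₀] [Module R P₀]

/-- Commutation of `dualTensorHom ∘ comm` with `lTensor` of the dual map. -/
lemma comm_dth (f : P₁ →ₗ[R] P₀) (z : M ⊗[R] Dual R P₀) :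
    dualTensorHom R P₁ M (TensorProduct.comm R M (Dual R P₁) (f.dualMap.lTensor M z)) =
      (dualTensorHom R P₀ M (TensorProduct.comm R M (Dual R P₀) z)) ∘ₗ f := by
  induction z using TensorProduct.induction_on with
  | zero => simp
  | tmul m φ => ext p; simp
  | add a b ha hb => simp only [map_add, ha, hb, add_comp]


/-- Descend a map killing `range f` along `g`. -/
lemma descend (f : P₁ →ₗ[R] P₀) (g : P₀ →ₗ[R] M)
    (hexact : Function.Exact f g) (hg : Function.Surjective g)
    {T : Type u} [AddCommGroup T] [Module R T] (κ : P₀ →ₗ[R] T)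
    (hκ : κ ∘ₗ f = 0) : ∃ ψ : M →ₗ[R] T, ψ ∘ₗ g = κ := by
  have hker : LinearMap.ker g = LinearMap.range f := LinearMap.exact_iff.mp hexact
  have hκ' : LinearMap.ker g ≤ LinearMap.ker κ := by
    rw [hker]
    rintro _ ⟨p, rfl⟩
    simpa using LinearMap.congr_fun hκ p
  set q : P₀ ⧸ LinearMap.ker g →ₗ[R] M := (LinearMap.ker g).liftQ g le_rfl with hq
  have hqinj : Function.Injective q := by
    rw [← LinearMap.ker_eq_bot, Submodule.ker_liftQ_eq_bot]
    exact le_rfl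
  have hqsurj : Function.Surjective q := by
    intro m; obtain ⟨p, rfl⟩ := hg m; exact ⟨Submodule.Quotient.mk p, rfl⟩
  set e := LinearEquiv.ofBijective q ⟨hqinj, hqsurj⟩ with he
  refine ⟨((LinearMap.ker g).liftQ κ hκ') ∘ₗ (e.symm : M →ₗ[R] _), ?_⟩
  ext p
  have h1 : e.symm (g p) = Submodule.Quotient.mk p := by
    rw [LinearEquiv.symm_apply_eq]
    rfl
  simp only [LinearMap.coe_comp, Function.comp_apply, LinearEquiv.coe_coe, h1]
  rfl

/-- `h : P₀ → M` factors through `g` followed by a map through a f.g. free module. -/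
def Facts (g : P₀ →ₗ[R] M) (h : P₀ →ₗ[R] M) : Prop :=
  ∃ (n : ℕ) (g' : M →ₗ[R] (Fin n → R)) (f' : (Fin n → R) →ₗ[R] M), f' ∘ₗ g' ∘ₗ g = h

lemma facts_add {g : P₀ →ₗ[R] M} {h₁ h₂ : P₀ →ₗ[R] M}
    (hu : Facts g h₁) (hv : Facts g h₂) : Facts g (h₁ + h₂) := by
  obtain ⟨n₁, g₁, f₁, rfl⟩ := hu
  obtain ⟨n₂, g₂, f₂, rfl⟩ := hv
  let e : (Fin (n₁ + n₂) → R) ≃ₗ[R] (Fin n₁ → R) × (Fin n₂ → R) :=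
    (LinearEquiv.funCongrLeft R R finSumFinEquiv).trans
      (LinearEquiv.sumArrowLequivProdArrow _ _ R R)
  refine ⟨n₁ + n₂, e.symm.toLinearMap ∘ₗ (g₁.prod g₂), (f₁.coprod f₂) ∘ₗ e.toLinearMap, ?_⟩
  ext p
  simp [LinearEquiv.apply_symm_apply]

/-- The image of `M ⊗ ker f.dualMap` consists of maps with `Facts`. -/
lemma facts_of_mem_kerdual (f : P₁ →ₗ[R] P₀) (g : P₀ →ₗ[R] M)
    (hexact : Function.Exact f g) (hg : Function.Surjective g)
    (w : M ⊗[R] (LinearMap.ker f.dualMap)) :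
    Facts g (dualTensorHom R P₀ M (TensorProduct.comm R M (Dual R P₀)
      ((LinearMap.ker f.dualMap).subtype.lTensor M w))) := by
  induction w using TensorProduct.induction_on with
  | zero => exact ⟨0, 0, 0, by simp⟩
  | tmul m κ =>
      have hκ : (κ : Dual R P₀) ∘ₗ f = 0 := κ.2
      obtain ⟨ψ, hψ⟩ := descend f g hexact hg (κ : Dual R P₀) hκ
      refine ⟨1, LinearMap.pi fun _ => ψ, (LinearMap.proj (0 : Fin 1)).smulRight m, ?_⟩
      ext p
      have := LinearMap.congr_fun hψ p
      simp only [LinearMap.coe_comp, Function.comp_apply] at this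
      simp [this]
  | add u v hu hv =>
      simpa only [map_add] using facts_add hu hv


set_option maxHeartbeats 1000000 in
theorem key (f : P₁ →ₗ[R] P₀) (g : P₀ →ₗ[R] M)
    [Module.Finite R P₁] [Module.Projective R P₁]
    [Module.Finite R P₀] [Module.Projective R P₀]
    (hexact : Function.Exact f g) (hg : Function.Surjective g) (x : R) :
    (∀ z : M ⊗[R] Dual R P₀, f.dualMap.lTensor M z = 0 →
        ∃ w : M ⊗[R] (LinearMap.ker f.dualMap),
          (LinearMap.ker f.dualMap).subtype.lTensor M w = x • z)
    ↔ ∃ (n : ℕ) (g' : M →ₗ[R] (Fin n → R)) (f' : (Fin n → R) →ₗ[R] M),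
        f' ∘ₗ g' = x • (LinearMap.id : M →ₗ[R] M) := by
  constructor
  · intro Hx
    -- find z₀ with Φ₀ z₀ = g
    obtain ⟨y₀, hy₀⟩ := (dth_bijective (R := R) (P := P₀) (N := M)).2 g
    set z₀ : M ⊗[R] Dual R P₀ := (TensorProduct.comm R M (Dual R P₀)).symm y₀ with hz₀def
    have hΦz₀ : dualTensorHom R P₀ M (TensorProduct.comm R M (Dual R P₀) z₀) = g := by
      rw [hz₀def, LinearEquiv.apply_symm_apply, hy₀]
    have hgf : g ∘ₗ f = 0 := by
      ext p; simpa using hexact.apply_apply_eq_zero p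
    have htz₀ : f.dualMap.lTensor M z₀ = 0 := by
      have h1 : dualTensorHom R P₁ M (TensorProduct.comm R M (Dual R P₁)
          (f.dualMap.lTensor M z₀)) = 0 := by
        rw [comm_dth, hΦz₀, hgf]
      have h2 := (dth_bijective (R := R) (P := P₁) (N := M)).1
        (a₁ := TensorProduct.comm R M (Dual R P₁) (f.dualMap.lTensor M z₀)) (a₂ := 0)
        (by simpa using h1)
      exact (TensorProduct.comm R M (Dual R P₁)).injective (by simpa using h2)
    obtain ⟨w, hw⟩ := Hx z₀ htz₀
    have hfacts := facts_of_mem_kerdual f g hexact hg w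
    rw [hw] at hfacts
    obtain ⟨n, g', f', hfact⟩ := hfacts
    refine ⟨n, g', f', ?_⟩
    ext m
    obtain ⟨p, rfl⟩ := hg m
    have := LinearMap.congr_fun hfact p
    simp only [map_smul, LinearMap.coe_comp, Function.comp_apply] at this ⊢
    rw [this, hΦz₀]
    simp
  · rintro ⟨n, g', f', hf'⟩ z hz
    set Φz : P₀ →ₗ[R] M := dualTensorHom R P₀ M (TensorProduct.comm R M (Dual R P₀) z) with hΦz
    have hΦzf : Φz ∘ₗ f = 0 := by
      rw [hΦz, ← comm_dth, hz]
      simp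
    set c : P₀ →ₗ[R] (Fin n → R) := g' ∘ₗ Φz with hc
    have hcf : c ∘ₗ f = 0 := by
      rw [hc, comp_assoc, hΦzf, comp_zero]
    have hmem : ∀ j : Fin n, (LinearMap.proj j ∘ₗ c : P₀ →ₗ[R] R) ∈ LinearMap.ker f.dualMap := by
      intro j
      show (LinearMap.proj j ∘ₗ c) ∘ₗ f = 0
      rw [comp_assoc, hcf, comp_zero]
    have hsum : ∀ v : Fin n → R, (∑ j, v j • (Pi.single j 1 : Fin n → R)) = v := by
      intro v; ext k
      simp [Pi.single_apply]
    refine ⟨∑ j : Fin n, (f' ((Pi.single j 1 : Fin n → R))) ⊗ₜ[R]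
      (⟨LinearMap.proj j ∘ₗ c, hmem j⟩ : LinearMap.ker f.dualMap), ?_⟩
    have hx : ∀ p : P₀, f' (c p) = x • Φz p := by
      intro p
      have := LinearMap.congr_fun hf' (Φz p)
      simpa [hc] using this
    refine (TensorProduct.comm R M (Dual R P₀)).injective
      ((dth_bijective (R := R) (P := P₀) (N := M)).1 ?_)
    ext p
    simp only [map_sum, lTensor_tmul, Submodule.coe_subtype, TensorProduct.comm_tmul,
      map_smul, LinearEquiv.coe_coe, LinearMap.coe_sum, Finset.sum_apply,
      dualTensorHom_apply, LinearMap.coe_comp, Function.comp_apply, proj_apply,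
      LinearMap.smul_apply]
    calc ∑ j : Fin n, c p j • f' ((Pi.single j 1 : Fin n → R))
        = f' (∑ j : Fin n, c p j • (Pi.single j 1 : Fin n → R)) := by
          rw [map_sum]; simp only [map_smul]
      _ = f' (c p) := by rw [hsum]
      _ = x • Φz p := hx p
      _ = x • (dualTensorHom R P₀ M ((TensorProduct.comm R M (Dual R P₀)) z)) p := rfl


end Algebra

section Cat


open CategoryTheory CategoryTheory.Limits LinearMap Module

variable (R : Type u) [CommRing R]
variable (P₁ P₀ : Type u) [AddCommGroup P₁] [Module R P₁] [AddCommGroup P₀] [Module R P₀]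
  [Module.Finite R P₁] [Module.Projective R P₁] [Module.Finite R P₀] [Module.Projective R P₀]
variable (f : P₁ →ₗ[R] P₀)

instance proj_dual₁ : Projective (ModuleCat.of R (Module.Dual R P₁)) :=
  (IsProjective.iff_projective _).mp inferInstance

instance proj_dual₀ : Projective (ModuleCat.of R (Module.Dual R P₀)) :=
  (IsProjective.iff_projective _).mp inferInstance

/-- The start of a projective resolution of the transpose. -/
noncomputable def trComplex : ChainComplex (ModuleCat.{u} R) ℕ :=
  ChainComplex.mk' (ModuleCat.of R (Module.Dual R P₁)) (ModuleCat.of R (Module.Dual R P₀))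
    (ModuleCat.ofHom f.dualMap)
    (fun g => ⟨_, Projective.d g,
      (Category.assoc _ _ _).trans ((congrArg _ (kernel.condition _)).trans comp_zero)⟩)

lemma trComplex_d_1_0 : (trComplex R P₁ P₀ f).d 1 0 = ModuleCat.ofHom f.dualMap := by
  simp [trComplex]

lemma trComplex_exactAt_succ (n : ℕ) : (trComplex R P₁ P₀ f).ExactAt (n + 1) := by
  rw [HomologicalComplex.exactAt_iff' _ (n + 1 + 1) (n + 1) n (by simp) (by simp)]
  dsimp [trComplex, HomologicalComplex.sc', HomologicalComplex.shortComplexFunctor',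
    ChainComplex.mk', ChainComplex.mk]
  match n with
  | 0 => apply exact_d_f
  | n + 1 => simp only [ChainComplex.of.d, dif_pos]; apply exact_d_f

instance trComplex_projective (n : ℕ) : Projective ((trComplex R P₁ P₀ f).X n) := by
  obtain (_ | _ | _ | n) := n
  · exact proj_dual₁ R P₁
  · exact proj_dual₀ R P₀
  · apply Projective.projective_over
  · apply Projective.projective_over

lemma asHom_d_mkQ :
    ModuleCat.ofHom (f.dualMap) ≫ ModuleCat.ofHom (LinearMap.range f.dualMap).mkQ = 0 := by
  ext φ
  exact (Submodule.Quotient.mk_eq_zero _).mpr ⟨φ, rfl⟩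

lemma trComplex_d10_mkQ :
    (trComplex R P₁ P₀ f).d 1 0 ≫ ModuleCat.ofHom (LinearMap.range f.dualMap).mkQ = 0 := by
  rw [trComplex_d_1_0]
  ext φ
  exact (Submodule.Quotient.mk_eq_zero _).mpr ⟨φ, rfl⟩

/-- The projective resolution of the Auslander transpose. -/
noncomputable def trRes :
    ProjectiveResolution (ModuleCat.of R ((Module.Dual R P₁) ⧸ LinearMap.range f.dualMap)) where
  complex := trComplex R P₁ P₀ f
  π := (ChainComplex.toSingle₀Equiv _ _).symm
    ⟨ModuleCat.ofHom (LinearMap.range f.dualMap).mkQ, trComplex_d10_mkQ R P₁ P₀ f⟩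
  quasiIso := ⟨fun n => by
    cases n with
    | zero =>
        rw [ChainComplex.quasiIsoAt₀_iff, ShortComplex.quasiIso_iff_of_zeros']
        · refine (ShortComplex.exact_and_epi_g_iff_of_iso
            (S₂ := ShortComplex.mk (ModuleCat.ofHom f.dualMap)
              (ModuleCat.ofHom (LinearMap.range f.dualMap).mkQ) (asHom_d_mkQ R P₁ P₀ f)) ?_).2
            ⟨?_, ?_⟩
          · refine ShortComplex.isoMk (Iso.refl _) (Iso.refl _) (Iso.refl _) ?_ ?_
            · dsimp
              simp [trComplex_d_1_0]
              rfl
            · dsimp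
              simp
              rfl
          · refine (ShortComplex.moduleCat_exact_iff _).mpr ?_
            intro v hv
            exact (Submodule.Quotient.mk_eq_zero _).mp hv
          · exact (ModuleCat.epi_iff_surjective _).mpr (Submodule.mkQ_surjective _)
        all_goals rfl
    | succ n =>
        rw [quasiIsoAt_iff_exactAt']
        · apply trComplex_exactAt_succ
        · apply ChainComplex.exactAt_succ_single_obj⟩


end Cat

section Glue

open CategoryTheory CategoryTheory.Limits LinearMap Module TensorProduct

variable {R : Type u} [CommRing R]

lemma annihilator_eq_of_iso {A B : ModuleCat.{u} R} (e : A ≅ B) :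
    Module.annihilator R A = Module.annihilator R B := by
  have e' := e.toLinearEquiv
  ext x
  simp only [Module.mem_annihilator]
  constructor
  · intro h b
    rw [← e'.apply_symm_apply b, ← map_smul, h, map_zero]
  · intro h a
    have h2 := h (e' a)
    rw [← map_smul] at h2
    exact e'.injective (by rw [h2, map_zero])


section Main

open CategoryTheory.MonoidalCategory

variable {M P₁ P₀ : Type u} [AddCommGroup M] [Module R M]
  [AddCommGroup P₁] [Module R P₁] [AddCommGroup P₀] [Module R P₀]
  [Module.Finite R P₁] [Module.Projective R P₁]
  [Module.Finite R P₀] [Module.Projective R P₀]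

set_option maxHeartbeats 1000000 in
theorem main (f : P₁ →ₗ[R] P₀) (g : P₀ →ₗ[R] M)
    (hexact : Function.Exact f g) (hg : Function.Surjective g) (x : R) :
    x ∈ Module.annihilator R
        (((Tor (ModuleCat.{u} R) 1).obj (ModuleCat.of R M)).obj
          (ModuleCat.of R ((Module.Dual R P₁) ⧸ LinearMap.range (LinearMap.dualMap f)))) ↔
      ∃ (n : ℕ) (g' : M →ₗ[R] (Fin n → R)) (f' : (Fin n → R) →ₗ[R] M),
        f' ∘ₗ g' = x • (LinearMap.id : M →ₗ[R] M) := by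
  classical
  set F : ModuleCat.{u} R ⥤ ModuleCat.{u} R :=
    (tensoringLeft (ModuleCat.{u} R)).obj (ModuleCat.of R M) with hF
  set P := trRes R P₁ P₀ f with hP
  set K := (F.mapHomologicalComplex (ComplexShape.down ℕ)).obj P.complex with hK
  set S := K.sc' 2 1 0 with hS
  have h1 : Module.annihilator R
      (((Tor (ModuleCat.{u} R) 1).obj (ModuleCat.of R M)).obj
        (ModuleCat.of R ((Module.Dual R P₁) ⧸ LinearMap.range (LinearMap.dualMap f)))) =
      Module.annihilator R S.moduleCatLeftHomologyData.H :=
    annihilator_eq_of_iso ((P.isoLeftDerivedObj F 1) ≪≫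
      (K.homologyIsoSc' 2 1 0 (by simp) (by simp)) ≪≫ S.moduleCatHomologyIso)
  rw [h1]
  -- identify the maps of `S`
  have hd10 : P.complex.d 1 0 = ModuleCat.ofHom f.dualMap := trComplex_d_1_0 R P₁ P₀ f
  have hSg : ⇑S.g = ⇑(f.dualMap.lTensor M) := by
    show ⇑(F.map (P.complex.d 1 0)) = _
    rw [hd10]
    rfl
  set d21 : ↑(P.complex.X 2) →ₗ[R] Module.Dual R P₀ := (P.complex.d 2 1).hom with hd21
  have hSf : ⇑S.f = ⇑(d21.lTensor M) := rfl
  have hrange : LinearMap.range d21 = LinearMap.ker f.dualMap := by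
    have h2 := (P.exact_succ 0).moduleCat_range_eq_ker
    have h3 : LinearMap.ker (P.complex.d 1 0).hom =
        LinearMap.ker f.dualMap := by rw [hd10]; rfl
    exact h2.trans h3
  set e : ↑(P.complex.X 2) →ₗ[R] ↥(LinearMap.ker f.dualMap) :=
    LinearMap.codRestrict _ d21 (fun c => hrange ▸ LinearMap.mem_range_self _ c) with he'
  have he : Function.Surjective e := by
    rintro ⟨κ, hκ⟩
    obtain ⟨c, hc⟩ := hrange.symm ▸ hκ
    exact ⟨c, Subtype.ext hc⟩
  have hcomp : (LinearMap.ker f.dualMap).subtype ∘ₗ e = d21 :=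
    LinearMap.subtype_comp_codRestrict _ _ _
  have h3 : x ∈ Module.annihilator R S.moduleCatLeftHomologyData.H ↔
      (∀ z : M ⊗[R] Module.Dual R P₀, f.dualMap.lTensor M z = 0 →
        ∃ w : M ⊗[R] ↥(LinearMap.ker f.dualMap),
          (LinearMap.ker f.dualMap).subtype.lTensor M w = x • z) := by
    rw [Module.mem_annihilator]
    constructor
    · intro H z hz
      have hz' : z ∈ LinearMap.ker S.g.hom := by
        show S.g z = 0
        rw [show S.g z = f.dualMap.lTensor M z from congrFun hSg z, hz]
        rfl
      have h4 := H (Submodule.Quotient.mk ⟨z, hz'⟩)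
      change x • (Submodule.Quotient.mk ⟨z, hz'⟩ :
        ↥(LinearMap.ker S.g.hom) ⧸ LinearMap.range S.moduleCatToCycles) = 0 at h4
      rw [← Submodule.Quotient.mk_smul, Submodule.Quotient.mk_eq_zero] at h4
      obtain ⟨w₂, hw₂⟩ := h4
      refine ⟨e.lTensor M w₂, ?_⟩
      have hv := congrArg Subtype.val hw₂
      change S.f w₂ = x • z at hv
      change M ⊗[R] ↑(P.complex.X 2) at w₂
      rw [← LinearMap.lTensor_comp_apply, hcomp]
      rw [show ⇑(d21.lTensor M) w₂ = S.f w₂ from (congrFun hSf w₂).symm] at *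
      exact hv
    · intro H a
      obtain ⟨⟨z, hz⟩, rfl⟩ := Submodule.Quotient.mk_surjective _ a
      change x • (Submodule.Quotient.mk ⟨z, hz⟩ :
        ↥(LinearMap.ker S.g.hom) ⧸ LinearMap.range S.moduleCatToCycles) = 0
      rw [← Submodule.Quotient.mk_smul, Submodule.Quotient.mk_eq_zero]
      have hz' : f.dualMap.lTensor M z = 0 := by
        rw [← congrFun hSg z]
        exact hz
      obtain ⟨w, hw⟩ := H z hz'
      obtain ⟨w₂, rfl⟩ := LinearMap.lTensor_surjective M he w
      refine ⟨w₂, ?_⟩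
      apply Subtype.ext
      change S.f w₂ = x • z
      rw [show S.f w₂ = ⇑(d21.lTensor M) w₂ from congrFun hSf w₂]
      rw [← hcomp, LinearMap.lTensor_comp]
      exact hw
  rw [h3]
  exact key f g hexact hg x

end Main

end Glue

end AuslanderTorAux

/-- Let `R` be a commutative Noetherian ring, `M` a finitely generated `R`-module, and
`P₁ → P₀ → M → 0` an exact sequence with `P₁, P₀` finitely generated projective; let
`Tr M = coker(f* : Hom(P₀,R) → Hom(P₁,R))` be the Auslander transpose.  Then the annihilator of
`Tor₁^R(M, Tr M)` equals the set of `x ∈ R` such that multiplication by `x` on `M` factors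
through a finitely generated free `R`-module. -/
theorem ann_tor_one_transpose_eq_factoring_set (R : Type u) [CommRing R] [IsNoetherianRing R]
    (M : Type u) [AddCommGroup M] [Module R M] [Module.Finite R M]
    (P₁ P₀ : Type u) [AddCommGroup P₁] [Module R P₁] [AddCommGroup P₀] [Module R P₀]
    [Module.Finite R P₁] [Module.Projective R P₁]
    [Module.Finite R P₀] [Module.Projective R P₀]
    (f : P₁ →ₗ[R] P₀) (g : P₀ →ₗ[R] M)
    (hexact : Function.Exact f g) (hg : Function.Surjective g) :
    ∀ x : R,
      x ∈ Module.annihilator R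
          (((Tor (ModuleCat.{u} R) 1).obj (ModuleCat.of R M)).obj
            (ModuleCat.of R ((Module.Dual R P₁) ⧸ LinearMap.range (LinearMap.dualMap f)))) ↔
      ∃ (n : ℕ) (g' : M →ₗ[R] (Fin n → R)) (f' : (Fin n → R) →ₗ[R] M),
        f' ∘ₗ g' = x • (LinearMap.id : M →ₗ[R] M) := by
  intro x
  exact AuslanderTorAux.main f g hexact hg x
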